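/- Let G be a connected graph on n vertices with normalized adjacency matrix eigenvalues 1 = λ_1 > λ_2 ≥ ... ≥ λ_n ≥ -1, and let B be an m×m principal submatrix of the normalized adjacency matrix with eigenvalues θ_1 ≥ ... ≥ θ_m. Then Σ_{i=2}^m 1/(1-θ_i) + (n-m)/2 ≤ K(G) ≤ Σ_{i=2}^m 1/(1-θ_i) + (n-m)/(1-λ_2). -/

import Mathlib

open Matrix Finset


private lemma dot_diag {p : ℕ} (d x : Fin p → ℝ) :
    x ⬝ᵥ (Matrix.diagonal d *ᵥ x) = ∑ i, d i * x i ^ 2 := by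
  simp only [dotProduct, mulVec_diagonal]
  exact Finset.sum_congr rfl fun i _ => by ring

private lemma quad_id {n m : ℕ} (P : Matrix (Fin n) (Fin m) ℝ) (D : Matrix (Fin n) (Fin n) ℝ)
    (hD : Dᵀ = D) (c : Fin m → ℝ) :
    (P *ᵥ c) ⬝ᵥ (D *ᵥ (P *ᵥ c)) = c ⬝ᵥ ((Pᵀ * D * P) *ᵥ c) := by
  rw [dotProduct_comm, mulVec_mulVec, dotProduct_mulVec, vecMul_mulVec]

  rw [transpose_mul, hD, dotProduct_mulVec]

private lemma exists_kernel_vec {a b : ℕ} (hab : a < b) (M : Matrix (Fin a) (Fin b) ℝ) :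
    ∃ c : Fin b → ℝ, c ≠ 0 ∧ M *ᵥ c = 0 := by
  by_contra h
  push_neg at h
  have hker : LinearMap.ker M.mulVecLin = ⊥ := by
    rw [Submodule.eq_bot_iff]
    intro c hc
    by_contra hc0
    exact absurd (LinearMap.mem_ker.mp hc) (h c hc0)
  have hinj : Function.Injective M.mulVecLin := LinearMap.ker_eq_bot.mp hker
  have := LinearMap.finrank_le_finrank_of_injective hinj
  simp [Module.finrank_pi] at this
  omega

private lemma sum_extend {m t : ℕ} (h : t ≤ m) (g : Fin t → ℝ) :
    ∑ i : Fin m, (if h' : (i : ℕ) < t then g ⟨i, h'⟩ else 0) = ∑ j : Fin t, g j := by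
  set F : ℕ → ℝ := fun i => if h' : i < t then g ⟨i, h'⟩ else 0 with hF
  have h1 : ∑ i : Fin m, (if h' : (i : ℕ) < t then g ⟨i, h'⟩ else 0) = ∑ i ∈ Finset.range m, F i :=
    Fin.sum_univ_eq_sum_range F m
  have h2 : ∑ j : Fin t, g j = ∑ i ∈ Finset.range t, F i := by
    rw [← Fin.sum_univ_eq_sum_range F t]
    exact (Finset.sum_congr rfl fun j _ => by simp [hF]).symm
  rw [h1, h2]
  exact (Finset.sum_subset (Finset.range_subset_range.mpr h) (fun x _ hx => by
    simp only [Finset.mem_range, not_lt] at hx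
    simp [hF, Nat.not_lt.mpr hx])).symm

private lemma key_a {n m : ℕ} (hmn : m ≤ n) (P : Matrix (Fin n) (Fin m) ℝ)
    (hP : Pᵀ * P = 1) (lam : Fin n → ℝ) (θ : Fin m → ℝ)
    (hD : Pᵀ * Matrix.diagonal lam * P = Matrix.diagonal θ)
    (hsort : ∀ i j : Fin n, i ≤ j → lam j ≤ lam i)
    (hθsort : ∀ i j : Fin m, i ≤ j → θ j ≤ θ i)
    (k : Fin m) : θ k ≤ lam ⟨k, lt_of_lt_of_le k.2 hmn⟩ := by
  set K : ℕ := (k : ℕ) with hK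
  have hK1m : K + 1 ≤ m := k.2
  have hKn : K < n := lt_of_lt_of_le k.2 hmn
  obtain ⟨c, hc0, hMc⟩ := exists_kernel_vec (Nat.lt_succ_self K)
    (fun (i : Fin K) (j : Fin (K + 1)) =>
      P ⟨i, lt_trans i.2 hKn⟩ ⟨j, lt_of_lt_of_le j.2 hK1m⟩)
  set cc : Fin m → ℝ := fun i => if h : (i : ℕ) < K + 1 then c ⟨i, h⟩ else 0 with hcc
  set w : Fin n → ℝ := P *ᵥ cc with hw
  -- w vanishes on indices < K
  have hw0 : ∀ i : Fin n, (i : ℕ) < K → w i = 0 := by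
    intro i hi
    have h1 : w i = ∑ i' : Fin m, (if h' : (i' : ℕ) < K + 1 then
        P i ⟨i', lt_of_lt_of_le h' hK1m⟩ * c ⟨i', h'⟩ else 0) := by
      rw [hw]
      simp only [mulVec, dotProduct, hcc]
      refine Finset.sum_congr rfl fun i' _ => ?_
      split_ifs with h'
      · congr 1
      · simp
    rw [h1, sum_extend hK1m (fun j => P i ⟨j, lt_of_lt_of_le j.2 hK1m⟩ * c j)]
    have := congrFun hMc ⟨i, hi⟩
    simp only [mulVec, dotProduct, Pi.zero_apply] at this
    rw [← this]
  have hcc0 : cc ≠ 0 := by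
    obtain ⟨j, hj⟩ := Function.ne_iff.mp hc0
    refine Function.ne_iff.mpr ⟨⟨j, lt_of_lt_of_le j.2 hK1m⟩, ?_⟩
    simp only [hcc, Pi.zero_apply]
    rw [dif_pos j.2]
    simpa using hj
  -- quadratic identities
  have hq1 : ∑ i, lam i * w i ^ 2 = ∑ i, θ i * cc i ^ 2 := by
    rw [← dot_diag lam w, ← dot_diag θ cc, hw, quad_id P _ (Matrix.diagonal_transpose lam) cc, hD]
  have hq2 : ∑ i, w i ^ 2 = ∑ i, cc i ^ 2 := by
    have h1 : w ⬝ᵥ ((1 : Matrix (Fin n) (Fin n) ℝ) *ᵥ w) = cc ⬝ᵥ ((Pᵀ * (1 : Matrix (Fin n) (Fin n) ℝ) * P) *ᵥ cc) := by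
      rw [hw]; exact quad_id P 1 Matrix.transpose_one cc
    rw [Matrix.mul_one, hP, Matrix.one_mulVec, Matrix.one_mulVec] at h1
    have e1 : ∀ {p : ℕ} (x : Fin p → ℝ), x ⬝ᵥ x = ∑ i, x i ^ 2 := fun x =>
      Finset.sum_congr rfl fun i _ => (sq (x i)).symm
    rw [e1 w, e1 cc] at h1
    exact h1
  have hs_pos : 0 < ∑ i, cc i ^ 2 := by
    obtain ⟨j, hj⟩ := Function.ne_iff.mp hcc0
    refine Finset.sum_pos' (fun i _ => sq_nonneg _) ⟨j, Finset.mem_univ j, ?_⟩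
    exact lt_of_le_of_ne (sq_nonneg _) (Ne.symm (pow_ne_zero 2 hj))
  -- the two inequalities
  have hineq1 : θ k * ∑ i, cc i ^ 2 ≤ ∑ i, θ i * cc i ^ 2 := by
    rw [Finset.mul_sum]
    refine Finset.sum_le_sum fun i _ => ?_
    by_cases hz : cc i = 0
    · simp [hz]
    · have hik : (i : ℕ) < K + 1 := by
        by_contra hcon
        exact hz (by simp [hcc, dif_neg hcon]; intro h; omega)
      have : i ≤ k := by
        rw [Fin.le_def]; omega
      exact mul_le_mul_of_nonneg_right (hθsort i k this) (sq_nonneg _)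
  have hineq2 : ∑ i, lam i * w i ^ 2 ≤ lam ⟨K, hKn⟩ * ∑ i, w i ^ 2 := by
    rw [Finset.mul_sum]
    refine Finset.sum_le_sum fun i _ => ?_
    by_cases hz : w i = 0
    · simp [hz]
    · have hik : K ≤ (i : ℕ) := by
        by_contra hcon
        exact hz (hw0 i (by omega))
      have : (⟨K, hKn⟩ : Fin n) ≤ i := by rw [Fin.le_def]; exact hik
      exact mul_le_mul_of_nonneg_right (hsort _ i this) (sq_nonneg _)
  have : θ k * ∑ i, cc i ^ 2 ≤ lam ⟨K, hKn⟩ * ∑ i, cc i ^ 2 := by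
    calc θ k * ∑ i, cc i ^ 2 ≤ ∑ i, θ i * cc i ^ 2 := hineq1
    _ = ∑ i, lam i * w i ^ 2 := hq1.symm
    _ ≤ lam ⟨K, hKn⟩ * ∑ i, w i ^ 2 := hineq2
    _ = lam ⟨K, hKn⟩ * ∑ i, cc i ^ 2 := by rw [hq2]
  exact le_of_mul_le_mul_right this hs_pos


private lemma tri_apply {n m : ℕ} (P : Matrix (Fin n) (Fin m) ℝ) (d : Fin n → ℝ)
    (j j' : Fin m) :
    (Pᵀ * Matrix.diagonal d * P) j j' = ∑ i, d i * (P i j * P i j') := by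
  rw [Matrix.mul_apply]
  refine Finset.sum_congr rfl fun i _ => ?_
  rw [Matrix.mul_diagonal, Matrix.transpose_apply]
  ring

private lemma key_b {n m : ℕ} (hmn : m ≤ n) (P : Matrix (Fin n) (Fin m) ℝ)
    (hP : Pᵀ * P = 1) (lam : Fin n → ℝ) (θ : Fin m → ℝ)
    (hD : Pᵀ * Matrix.diagonal lam * P = Matrix.diagonal θ)
    (hsort : ∀ i j : Fin n, i ≤ j → lam j ≤ lam i)
    (hθsort : ∀ i j : Fin m, i ≤ j → θ j ≤ θ i)
    (k : Fin m) (hkn : n - m + (k : ℕ) < n) : lam ⟨n - m + (k : ℕ), hkn⟩ ≤ θ k := by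
  have hm0 : 0 < m := k.pos
  set P' : Matrix (Fin n) (Fin m) ℝ := P.submatrix Fin.rev Fin.rev with hP'def
  set lam' : Fin n → ℝ := fun i => -lam i.rev with hlam'def
  set θ' : Fin m → ℝ := fun j => -θ j.rev with hθ'def
  have hrevsum : ∀ (f : Fin n → ℝ), ∑ i : Fin n, f i.rev = ∑ i : Fin n, f i := fun f =>
    Fintype.sum_bijective Fin.rev Fin.rev_involutive.bijective (fun i => f i.rev) f
      (fun x => rfl)
  have hP' : P'ᵀ * P' = 1 := by
    ext j j'
    rw [Matrix.mul_apply]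
    have : ∀ i : Fin n, P'ᵀ j i * P' i j' = P i.rev j.rev * P i.rev j'.rev := fun i => rfl
    simp only [this]
    rw [hrevsum (fun i => P i j.rev * P i j'.rev)]
    have h2 : (Pᵀ * P) j.rev j'.rev = ∑ i, P i j.rev * P i j'.rev := by
      rw [Matrix.mul_apply]; rfl
    rw [← h2, hP]
    simp [Matrix.one_apply, Fin.rev_inj]
  have hD' : P'ᵀ * Matrix.diagonal lam' * P' = Matrix.diagonal θ' := by
    ext j j'
    rw [tri_apply]
    have : ∀ i : Fin n, lam' i * (P' i j * P' i j')
        = -(lam i.rev * (P i.rev j.rev * P i.rev j'.rev)) := fun i => by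
      simp [hlam'def, hP'def]
    simp only [this, Finset.sum_neg_distrib]
    rw [hrevsum (fun i => lam i * (P i j.rev * P i j'.rev)), ← tri_apply, hD]
    by_cases h : j = j'
    · subst h; simp [Matrix.diagonal_apply, hθ'def]
    · rw [Matrix.diagonal_apply_ne _ h, Matrix.diagonal_apply_ne _ (by simp [Fin.rev_inj, h]),
        neg_zero]
  have hsort' : ∀ i j : Fin n, i ≤ j → lam' j ≤ lam' i := by
    intro i j hij
    simp only [hlam'def, neg_le_neg_iff]
    exact hsort j.rev i.rev (Fin.rev_le_rev.mpr hij)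
  have hθsort' : ∀ i j : Fin m, i ≤ j → θ' j ≤ θ' i := by
    intro i j hij
    simp only [hθ'def, neg_le_neg_iff]
    exact hθsort j.rev i.rev (Fin.rev_le_rev.mpr hij)
  have h := key_a hmn P' hP' lam' θ' hD' hsort' hθsort' k.rev
  have e1 : θ' k.rev = -θ k := by rw [hθ'def]; simp [Fin.rev_rev]
  have e2 : (⟨(k.rev : ℕ), lt_of_lt_of_le k.rev.2 hmn⟩ : Fin n).rev
      = ⟨n - m + (k : ℕ), hkn⟩ := by
    ext
    simp only [Fin.val_rev]
    omega
  rw [e1, hlam'def] at h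
  simp only at h
  rw [e2] at h
  linarith


private lemma star_eq_transpose_real {p : ℕ} (M : Matrix (Fin p) (Fin p) ℝ) : star M = Mᵀ := by
  ext i j
  simp [Matrix.star_apply]

private lemma submatrix_case {n m : ℕ} (N : Matrix (Fin n) (Fin n) ℝ) (hN : N.IsHermitian)
    (f : Fin m → Fin n) (hf : Function.Injective f) :
    ∃ S : Matrix (Fin n) (Fin m) ℝ, Sᵀ * S = 1 ∧ N.submatrix f f = Sᵀ * N * S := by
  refine ⟨Matrix.of (fun i j => if i = f j then 1 else 0), ?_, ?_⟩
  · ext j j'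
    simp only [Matrix.mul_apply, Matrix.transpose_apply, Matrix.of_apply]
    rw [Finset.sum_congr rfl (fun i _ => show (if i = f j then (1:ℝ) else 0) *
        (if i = f j' then 1 else 0) = if i = f j then (if i = f j' then (1:ℝ) else 0) else 0
      from by split_ifs <;> simp)]
    rw [Finset.sum_ite_eq' Finset.univ (f j) (fun i => if i = f j' then (1:ℝ) else 0)]
    simp [Matrix.one_apply, hf.eq_iff]
  · ext j j'
    simp only [Matrix.submatrix_apply, Matrix.mul_apply, Matrix.transpose_apply, Matrix.of_apply]
    have h1 : ∀ i' : Fin n, (∑ i : Fin n, (if i = f j then (1:ℝ) else 0) * N i i')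
        = N (f j) i' := by
      intro i'
      rw [Finset.sum_congr rfl (fun i _ => show (if i = f j then (1:ℝ) else 0) * N i i'
          = if i = f j then N i i' else 0 from by split_ifs <;> simp)]
      exact Finset.sum_ite_eq' Finset.univ (f j) (fun i => N i i') |>.trans (by simp)
    rw [Finset.sum_congr rfl (fun i' _ => by rw [h1])]
    rw [Finset.sum_congr rfl (fun i' _ => show N (f j) i' * (if i' = f j' then (1:ℝ) else 0)
        = if i' = f j' then N (f j) i' else 0 from by split_ifs <;> simp)]
    rw [Finset.sum_ite_eq' Finset.univ (f j') (fun i' => N (f j) i')]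
    simp

private lemma construct_P {n m : ℕ} (N : Matrix (Fin n) (Fin n) ℝ) (hN : N.IsHermitian)
    (B : Matrix (Fin m) (Fin m) ℝ) (hBH : B.IsHermitian)
    (S : Matrix (Fin n) (Fin m) ℝ) (hS1 : Sᵀ * S = 1) (hS2 : B = Sᵀ * N * S)
    (lam : Fin n → ℝ) (hlam : lam = hN.eigenvalues)
    (θ : Fin m → ℝ) (hθ : θ = hBH.eigenvalues) :
    ∃ P : Matrix (Fin n) (Fin m) ℝ, Pᵀ * P = 1 ∧
      Pᵀ * Matrix.diagonal lam * P = Matrix.diagonal θ := by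
  set UN : Matrix (Fin n) (Fin n) ℝ := (hN.eigenvectorUnitary : Matrix (Fin n) (Fin n) ℝ)
    with hUN
  set UB : Matrix (Fin m) (Fin m) ℝ := (hBH.eigenvectorUnitary : Matrix (Fin m) (Fin m) ℝ)
    with hUB
  have hUN1 : UNᵀ * UN = 1 := by
    rw [← star_eq_transpose_real]
    exact Matrix.mem_unitaryGroup_iff'.mp (hN.eigenvectorUnitary).2
  have hUN2 : UN * UNᵀ = 1 := by
    rw [← star_eq_transpose_real]
    exact Matrix.mem_unitaryGroup_iff.mp (hN.eigenvectorUnitary).2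
  have hUB1 : UBᵀ * UB = 1 := by
    rw [← star_eq_transpose_real]
    exact Matrix.mem_unitaryGroup_iff'.mp (hBH.eigenvectorUnitary).2
  have hdiagN : UNᵀ * N * UN = Matrix.diagonal lam := by
    rw [← star_eq_transpose_real]
    have := hN.conjStarAlgAut_star_eigenvectorUnitary
    simp only [Unitary.conjStarAlgAut_apply, star_star, Unitary.coe_star] at this
    rw [this, hlam]
    exact congrArg Matrix.diagonal (funext fun i => by simp [RCLike.ofReal_real_eq_id])
  have hdiagB : UBᵀ * B * UB = Matrix.diagonal θ := by
    rw [← star_eq_transpose_real]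
    have := hBH.conjStarAlgAut_star_eigenvectorUnitary
    simp only [Unitary.conjStarAlgAut_apply, star_star, Unitary.coe_star] at this
    rw [this, hθ]
    exact congrArg Matrix.diagonal (funext fun i => by simp [RCLike.ofReal_real_eq_id])
  have hNspec : UN * Matrix.diagonal lam * UNᵀ = N := by
    have := congrArg (fun M => UN * M * UNᵀ) hdiagN
    rw [← this]
    calc UN * (UNᵀ * N * UN) * UNᵀ = (UN * UNᵀ) * N * (UN * UNᵀ) := by
          simp only [Matrix.mul_assoc]
    _ = N := by rw [hUN2, Matrix.one_mul, Matrix.mul_one]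
  refine ⟨UNᵀ * S * UB, ?_, ?_⟩
  · have hT : (UNᵀ * S * UB)ᵀ = UBᵀ * (Sᵀ * UN) := by
      rw [Matrix.transpose_mul, Matrix.transpose_mul, Matrix.transpose_transpose]
    rw [hT]
    calc UBᵀ * (Sᵀ * UN) * (UNᵀ * S * UB)
        = UBᵀ * ((Sᵀ * (UN * UNᵀ)) * S) * UB := by simp only [Matrix.mul_assoc]
    _ = UBᵀ * UB := by rw [hUN2, Matrix.mul_one, hS1, Matrix.mul_one]
    _ = 1 := hUB1
  · have hT : (UNᵀ * S * UB)ᵀ = UBᵀ * (Sᵀ * UN) := by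
      rw [Matrix.transpose_mul, Matrix.transpose_mul, Matrix.transpose_transpose]
    rw [hT]
    calc UBᵀ * (Sᵀ * UN) * Matrix.diagonal lam * (UNᵀ * S * UB)
        = UBᵀ * (Sᵀ * (UN * Matrix.diagonal lam * UNᵀ) * S) * UB := by
          simp only [Matrix.mul_assoc]
    _ = UBᵀ * (Sᵀ * N * S) * UB := by rw [hNspec]
    _ = Matrix.diagonal θ := by rw [← hS2, hdiagB]


private lemma sums_bound {n m : ℕ} [NeZero n] [NeZero m] (hn : 1 < n) (hmn : m ≤ n)
    (lam : Fin n → ℝ) (θ : Fin m → ℝ)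
    (hsort : ∀ i j : Fin n, i ≤ j → lam j ≤ lam i)
    (hlamlt : ∀ i : Fin n, i ≠ 0 → lam i < 1)
    (hlamge : ∀ i : Fin n, -1 ≤ lam i)
    (ha : ∀ k : Fin m, θ k ≤ lam ⟨k, lt_of_lt_of_le k.2 hmn⟩)
    (hb : ∀ (k : Fin m) (h : n - m + (k : ℕ) < n), lam ⟨n - m + (k : ℕ), h⟩ ≤ θ k) :
    (∑ i ∈ Finset.univ.erase (0 : Fin m), (1 - θ i)⁻¹) + ((n : ℝ) - m)/2
        ≤ ∑ i ∈ Finset.univ.erase (0 : Fin n), (1 - lam i)⁻¹ ∧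
      ∑ i ∈ Finset.univ.erase (0 : Fin n), (1 - lam i)⁻¹
        ≤ (∑ i ∈ Finset.univ.erase (0 : Fin m), (1 - θ i)⁻¹)
            + ((n : ℝ) - m)/(1 - lam ⟨1, hn⟩) := by
  have hm : 0 < m := Nat.pos_of_ne_zero (NeZero.ne m)
  have hvne : ∀ i : Fin n, i ≠ 0 ↔ (i : ℕ) ≠ 0 := fun i => by
    rw [Ne, Fin.ext_iff, Fin.val_zero]
  have hvnem : ∀ k : Fin m, k ≠ 0 ↔ (k : ℕ) ≠ 0 := fun k => by
    rw [Ne, Fin.ext_iff, Fin.val_zero]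
  have hpos : ∀ i : Fin n, i ≠ 0 → 0 < 1 - lam i := fun i h => by
    have := hlamlt i h; linarith
  have hθpos : ∀ k : Fin m, k ≠ 0 → 0 < 1 - θ k := by
    intro k hk
    have h1 : (⟨(k : ℕ), lt_of_lt_of_le k.2 hmn⟩ : Fin n) ≠ 0 := by
      rw [hvne]
      simpa using (hvnem k).mp hk
    have := lt_of_le_of_lt (ha k) (hlamlt _ h1)
    linarith
  have hglam : ∀ i : Fin n, i ≠ 0 → (2 : ℝ)⁻¹ ≤ (1 - lam i)⁻¹ := fun i h =>
    inv_anti₀ (hpos i h) (by have := hlamge i; linarith)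
  have hglam2 : ∀ i : Fin n, i ≠ 0 → (1 - lam i)⁻¹ ≤ (1 - lam ⟨1, hn⟩)⁻¹ := by
    intro i h
    refine inv_anti₀ (hpos _ (by rw [hvne]; simp)) ?_
    have h1 : (⟨1, hn⟩ : Fin n) ≤ i := by
      rw [Fin.le_def]
      simp only [Fin.val_mk]
      have := (hvne i).mp h
      omega
    have := hsort _ _ h1
    linarith
  have hcast : ((n - m : ℕ) : ℝ) = (n : ℝ) - m := by rw [Nat.cast_sub hmn]
  have hcerase : (Finset.univ.erase (0 : Fin n)).card = n - 1 := by
    rw [Finset.card_erase_of_mem (Finset.mem_univ _), Finset.card_univ, Fintype.card_fin]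
  have hceraseM : (Finset.univ.erase (0 : Fin m)).card = m - 1 := by
    rw [Finset.card_erase_of_mem (Finset.mem_univ _), Finset.card_univ, Fintype.card_fin]
  have hemb : ∀ k : Fin m, n - m + (k : ℕ) < n := fun k => by have := k.2; omega
  constructor
  · -- lower bound
    rw [← Finset.sum_filter_add_sum_filter_not (Finset.univ.erase (0 : Fin n))
      (fun i : Fin n => (i : ℕ) < m) (fun i => (1 - lam i)⁻¹)]
    have e1 : (Finset.univ.erase (0 : Fin n)).filter (fun i : Fin n => (i : ℕ) < m)
        = (Finset.univ.erase (0 : Fin m)).map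
            ⟨fun k => ⟨(k : ℕ), lt_of_lt_of_le k.2 hmn⟩, fun a b hab => by
              have := congrArg Fin.val hab
              simp only [Fin.val_mk] at this
              exact Fin.ext this⟩ := by
      ext i
      constructor
      · intro hi
        rw [Finset.mem_filter, Finset.mem_erase] at hi
        obtain ⟨⟨hi0, -⟩, him⟩ := hi
        rw [Finset.mem_map]
        refine ⟨⟨(i : ℕ), him⟩, ?_, Fin.ext rfl⟩
        rw [Finset.mem_erase]
        refine ⟨?_, Finset.mem_univ _⟩
        rw [hvnem]
        simpa using (hvne i).mp hi0
      · intro hi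
        rw [Finset.mem_map] at hi
        obtain ⟨k, hk, rfl⟩ := hi
        rw [Finset.mem_erase] at hk
        rw [Finset.mem_filter, Finset.mem_erase]
        have hk0 := (hvnem k).mp hk.1
        exact ⟨⟨by rw [hvne]; exact hk0, Finset.mem_univ _⟩, k.2⟩
    have hcard2 : ((Finset.univ.erase (0 : Fin n)).filter
        (fun i : Fin n => ¬ (i : ℕ) < m)).card = n - m := by
      have := Finset.card_filter_add_card_filter_not (s := Finset.univ.erase (0 : Fin n))
        (p := fun i : Fin n => (i : ℕ) < m)
      rw [hcerase, e1, Finset.card_map, hceraseM] at this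
      omega
    have b1 : ∑ i ∈ Finset.univ.erase (0 : Fin m), (1 - θ i)⁻¹
        ≤ ∑ i ∈ (Finset.univ.erase (0 : Fin n)).filter (fun i : Fin n => (i : ℕ) < m),
            (1 - lam i)⁻¹ := by
      rw [e1, Finset.sum_map]
      refine Finset.sum_le_sum fun k hk => ?_
      have hk0 : k ≠ 0 := (Finset.mem_erase.mp hk).1
      have hik : (⟨(k : ℕ), lt_of_lt_of_le k.2 hmn⟩ : Fin n) ≠ 0 := by
        rw [hvne]; simpa using (hvnem k).mp hk0
      show (1 - θ k)⁻¹ ≤ (1 - lam ⟨(k : ℕ), lt_of_lt_of_le k.2 hmn⟩)⁻¹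
      exact inv_anti₀ (hpos _ hik) (by have := ha k; linarith)
    have b2 : ((n : ℝ) - m)/2 ≤ ∑ i ∈ (Finset.univ.erase (0 : Fin n)).filter
        (fun i : Fin n => ¬ (i : ℕ) < m), (1 - lam i)⁻¹ := by
      have hle := Finset.card_nsmul_le_sum ((Finset.univ.erase (0 : Fin n)).filter
        (fun i : Fin n => ¬ (i : ℕ) < m)) (fun i => (1 - lam i)⁻¹) ((2 : ℝ)⁻¹)
        (fun i hi => hglam i (Finset.mem_erase.mp (Finset.mem_filter.mp hi).1).1)
      rw [hcard2, nsmul_eq_mul, hcast] at hle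
      calc ((n : ℝ) - m)/2 = ((n : ℝ) - m) * (2 : ℝ)⁻¹ := by ring
      _ ≤ _ := hle
    linarith
  · -- upper bound
    rw [← Finset.sum_filter_add_sum_filter_not (Finset.univ.erase (0 : Fin n))
      (fun i : Fin n => n - m < (i : ℕ)) (fun i => (1 - lam i)⁻¹)]
    have e3 : (Finset.univ.erase (0 : Fin n)).filter (fun i : Fin n => n - m < (i : ℕ))
        = (Finset.univ.erase (0 : Fin m)).map
            ⟨fun k => ⟨n - m + (k : ℕ), hemb k⟩, fun a b hab => by
              have h1 : n - m + (a : ℕ) = n - m + (b : ℕ) := congrArg Fin.val hab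
              exact Fin.ext (by omega)⟩ := by
      ext i
      constructor
      · intro hi
        rw [Finset.mem_filter, Finset.mem_erase] at hi
        obtain ⟨⟨hi0, -⟩, him⟩ := hi
        rw [Finset.mem_map]
        have hin := i.2
        refine ⟨⟨(i : ℕ) - (n - m), by omega⟩, ?_, Fin.ext (by show n - m + ((i : ℕ) - (n - m)) = (i : ℕ); omega)⟩
        rw [Finset.mem_erase]
        refine ⟨?_, Finset.mem_univ _⟩
        rw [hvnem]
        simp
        omega
      · intro hi
        rw [Finset.mem_map] at hi
        obtain ⟨k, hk, rfl⟩ := hi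
        rw [Finset.mem_erase] at hk
        rw [Finset.mem_filter, Finset.mem_erase]
        have hk0 := (hvnem k).mp hk.1
        refine ⟨⟨by rw [hvne]; show n - m + (k : ℕ) ≠ 0; omega, Finset.mem_univ _⟩,
          by show n - m < n - m + (k : ℕ); omega⟩
    have hcard4 : ((Finset.univ.erase (0 : Fin n)).filter
        (fun i : Fin n => ¬ n - m < (i : ℕ))).card = n - m := by
      have := Finset.card_filter_add_card_filter_not (s := Finset.univ.erase (0 : Fin n))
        (p := fun i : Fin n => n - m < (i : ℕ))
      rw [hcerase, e3, Finset.card_map, hceraseM] at this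
      omega
    have b3 : ∑ i ∈ (Finset.univ.erase (0 : Fin n)).filter
        (fun i : Fin n => n - m < (i : ℕ)), (1 - lam i)⁻¹
        ≤ ∑ i ∈ Finset.univ.erase (0 : Fin m), (1 - θ i)⁻¹ := by
      rw [e3, Finset.sum_map]
      refine Finset.sum_le_sum fun k hk => ?_
      have hk0 : k ≠ 0 := (Finset.mem_erase.mp hk).1
      have hbk := hb k (by have := k.2; omega)
      show (1 - lam ⟨n - m + (k : ℕ), by have := k.2; omega⟩)⁻¹ ≤ (1 - θ k)⁻¹
      exact inv_anti₀ (hθpos k hk0) (by linarith)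
    have b4 : ∑ i ∈ (Finset.univ.erase (0 : Fin n)).filter
        (fun i : Fin n => ¬ n - m < (i : ℕ)), (1 - lam i)⁻¹
        ≤ ((n : ℝ) - m)/(1 - lam ⟨1, hn⟩) := by
      have hle := Finset.sum_le_card_nsmul ((Finset.univ.erase (0 : Fin n)).filter
        (fun i : Fin n => ¬ n - m < (i : ℕ))) (fun i => (1 - lam i)⁻¹) ((1 - lam ⟨1, hn⟩)⁻¹)
        (fun i hi => hglam2 i (Finset.mem_erase.mp (Finset.mem_filter.mp hi).1).1)
      rw [hcard4, nsmul_eq_mul, hcast] at hle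
      calc _ ≤ ((n : ℝ) - m) * (1 - lam ⟨1, hn⟩)⁻¹ := hle
      _ = ((n : ℝ) - m)/(1 - lam ⟨1, hn⟩) := by rw [div_eq_mul_inv]
    linarith

/-- Theorem 5.5: let `G` be a connected graph with normalized adjacency eigenvalues
`1 = λ₁ > λ₂ ≥ ... ≥ λₙ ≥ -1` and let `B` be an `m×m` matrix which is either a principal
submatrix of the normalized adjacency matrix or the quotient matrix of a vertex partition
(equivalently, `B = Sᵀ N S` for some `S` with orthonormal columns), with eigenvalues
`θ₁ ≥ ... ≥ θₘ`. Then
`∑_{i=2}^m 1/(1-θᵢ) + (n-m)/2 ≤ K(G) ≤ ∑_{i=2}^m 1/(1-θᵢ) + (n-m)/(1-λ₂)`. -/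
theorem kemeny_interlacing_bounds {n m : ℕ} [NeZero n] [NeZero m]
    (hn : 1 < n) (hmn : m ≤ n)
    (N : Matrix (Fin n) (Fin n) ℝ) (hN : N.IsHermitian)
    (lam : Fin n → ℝ) (hlam : lam = hN.eigenvalues)
    (hsort : ∀ i j : Fin n, i ≤ j → lam j ≤ lam i)
    (hlam0 : lam 0 = 1) (hlamlt : ∀ i : Fin n, i ≠ 0 → lam i < 1)
    (hlamge : ∀ i : Fin n, -1 ≤ lam i)
    (B : Matrix (Fin m) (Fin m) ℝ) (hBH : B.IsHermitian)
    (hB : (∃ f : Fin m → Fin n, Function.Injective f ∧ B = N.submatrix f f) ∨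
      (∃ S : Matrix (Fin n) (Fin m) ℝ, Sᵀ * S = 1 ∧ B = Sᵀ * N * S))
    (θ : Fin m → ℝ) (hθ : θ = hBH.eigenvalues)
    (hθsort : ∀ i j : Fin m, i ≤ j → θ j ≤ θ i) :
    (∑ i ∈ Finset.univ.erase (0 : Fin m), (1 - θ i)⁻¹) + ((n : ℝ) - m)/2
        ≤ ∑ i ∈ Finset.univ.erase (0 : Fin n), (1 - lam i)⁻¹ ∧
      ∑ i ∈ Finset.univ.erase (0 : Fin n), (1 - lam i)⁻¹
        ≤ (∑ i ∈ Finset.univ.erase (0 : Fin m), (1 - θ i)⁻¹)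
            + ((n : ℝ) - m)/(1 - lam ⟨1, hn⟩) := by
  
  obtain ⟨S, hS1, hS2⟩ : ∃ S : Matrix (Fin n) (Fin m) ℝ, Sᵀ * S = 1 ∧ B = Sᵀ * N * S := by
    rcases hB with ⟨f, hf, hBf⟩ | hS
    · obtain ⟨S, h1, h2⟩ := submatrix_case N hN f hf
      exact ⟨S, h1, hBf.trans h2⟩
    · exact hS
  obtain ⟨P, hPP, hPD⟩ := construct_P N hN B hBH S hS1 hS2 lam hlam θ hθ
  have ha : ∀ k : Fin m, θ k ≤ lam ⟨k, lt_of_lt_of_le k.2 hmn⟩ :=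
    fun k => key_a hmn P hPP lam θ hPD hsort hθsort k
  have hb : ∀ (k : Fin m) (h : n - m + (k : ℕ) < n), lam ⟨n - m + (k : ℕ), h⟩ ≤ θ k :=
    fun k h => key_b hmn P hPP lam θ hPD hsort hθsort k h
  exact sums_bound hn hmn lam θ hsort hlamlt hlamge ha hb
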